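/- Let Φ : ℝ^T → ℝ^T be the map sending θ to the vector of cell probabilities Φ(θ) = (p_θ(i_D, i*_{D^c}))_{(D,i_D)∈T}. Then Φ is differentiable and, for every θ ∈ ℝ^T, the determinant of its derivative satisfies det(DΦ(θ)) = ( ∏_{(D,i_D)∈T} p_θ(i_D, i*_{D^c}) ) · ( 1 − Σ_{∅≠H⊆V} Σ_{l_H∈I_H*} p_θ(l_H, i*_{H^c}) · Σ_{F∈𝒟, F⊆H} (−1)^{|F|−1} ). -/

import Mathlib

open Finset MeasureTheory

/-- The cell equal to `i` on `F` and to the baseline `b` off `F`. -/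
def cellOn {V : Type} [DecidableEq V] {I : V → Type} (b : ∀ γ, I γ)
    (F : Finset V) (i : ∀ γ, I γ) : ∀ γ, I γ :=
  fun γ => if γ ∈ F then i γ else b γ

/-- The support of a cell: the set of coordinates that are off baseline. -/
def cellSupport {V : Type} [Fintype V] [DecidableEq V] {I : V → Type}
    [∀ γ, DecidableEq (I γ)] (b : ∀ γ, I γ) (j : ∀ γ, I γ) : Finset V :=
  Finset.univ.filter (fun γ => j γ ≠ b γ)

/-- A generating class: a nonempty collection of nonempty subsets of `V` closed
under nonempty subsets. -/
def IsGenClass {V : Type} [DecidableEq V] (𝒟 : Finset (Finset V)) : Prop :=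
  𝒟.Nonempty ∧ (∀ D ∈ 𝒟, D ≠ ∅) ∧ ∀ D ∈ 𝒟, ∀ F ⊆ D, F ≠ ∅ → F ∈ 𝒟

/-- The index set `T = {(D, i_D) : D ∈ 𝒟, i_D ∈ I_D*}`; a tuple `i_D ∈ I_D*` is
represented by the unique cell whose support is exactly `D`. -/
def TParam {V : Type} [Fintype V] [DecidableEq V] (I : V → Type)
    [∀ γ, DecidableEq (I γ)] (b : ∀ γ, I γ) (𝒟 : Finset (Finset V)) : Type :=
  {x : Finset V × (∀ γ, I γ) // x.1 ∈ 𝒟 ∧ cellSupport b x.2 = x.1}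

noncomputable instance {V : Type} [Fintype V] [DecidableEq V] (I : V → Type)
    [∀ γ, Fintype (I γ)] [∀ γ, DecidableEq (I γ)] (b : ∀ γ, I γ)
    (𝒟 : Finset (Finset V)) : Fintype (TParam I b 𝒟) := by
  unfold TParam; infer_instance

instance {V : Type} [Fintype V] [DecidableEq V] (I : V → Type)
    [∀ γ, DecidableEq (I γ)] (b : ∀ γ, I γ)
    (𝒟 : Finset (Finset V)) : DecidableEq (TParam I b 𝒟) := by
  unfold TParam; infer_instance

/-- The exponent `Σ_{F ∈ 𝒟, F ⊆ S(j)} θ(F, j_F)` of the hierarchical model. -/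
noncomputable def energy {V : Type} [Fintype V] [DecidableEq V] {I : V → Type}
    [∀ γ, Fintype (I γ)] [∀ γ, DecidableEq (I γ)] (b : ∀ γ, I γ)
    (𝒟 : Finset (Finset V)) (θ : TParam I b 𝒟 → ℝ) (j : ∀ γ, I γ) : ℝ :=
  ∑ t : TParam I b 𝒟, if t.1.2 = cellOn b t.1.1 j then θ t else 0

/-- The partition function `Z(θ)`. -/
noncomputable def Zfun {V : Type} [Fintype V] [DecidableEq V] {I : V → Type}
    [∀ γ, Fintype (I γ)] [∀ γ, DecidableEq (I γ)] (b : ∀ γ, I γ)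
    (𝒟 : Finset (Finset V)) (θ : TParam I b 𝒟 → ℝ) : ℝ :=
  ∑ j : (∀ γ, I γ), Real.exp (energy b 𝒟 θ j)

/-- The log-partition function `k(θ) = log Z(θ)`. -/
noncomputable def kfun {V : Type} [Fintype V] [DecidableEq V] {I : V → Type}
    [∀ γ, Fintype (I γ)] [∀ γ, DecidableEq (I γ)] (b : ∀ γ, I γ)
    (𝒟 : Finset (Finset V)) (θ : TParam I b 𝒟 → ℝ) : ℝ :=
  Real.log (Zfun b 𝒟 θ)

/-- The hierarchical log-linear probability function `p_θ`. -/
noncomputable def phier {V : Type} [Fintype V] [DecidableEq V] {I : V → Type}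
    [∀ γ, Fintype (I γ)] [∀ γ, DecidableEq (I γ)] (b : ∀ γ, I γ)
    (𝒟 : Finset (Finset V)) (θ : TParam I b 𝒟 → ℝ) (j : ∀ γ, I γ) : ℝ :=
  Real.exp (energy b 𝒟 θ j) / Zfun b 𝒟 θ

set_option linter.unusedSectionVars false

section JacAux

open Matrix

variable {V : Type} [Fintype V] [DecidableEq V] {I : V → Type}
  [∀ γ, Fintype (I γ)] [∀ γ, DecidableEq (I γ)] (b : ∀ γ, I γ) (𝒟 : Finset (Finset V))

lemma cellOn_support_self (j : ∀ γ, I γ) : cellOn b (cellSupport b j) j = j := by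
  funext γ
  simp only [cellOn, cellSupport, mem_filter, mem_univ, true_and]
  by_cases h : j γ = b γ <;> simp [h]

lemma cellSupport_cellOn_of_subset {F : Finset V} {j : ∀ γ, I γ}
    (h : F ⊆ cellSupport b j) : cellSupport b (cellOn b F j) = F := by
  ext γ
  simp only [cellSupport, cellOn, mem_filter, mem_univ, true_and]
  by_cases hγ : γ ∈ F
  · have := h hγ
    simp only [cellSupport, mem_filter, mem_univ, true_and] at this
    simp [hγ, this]
  · simp [hγ]

lemma subset_of_cond {s : TParam I b 𝒟} {j : ∀ γ, I γ}
    (h : s.1.2 = cellOn b s.1.1 j) : s.1.1 ⊆ cellSupport b j := by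
  intro γ hγ
  have h2 : γ ∈ cellSupport b s.1.2 := s.2.2.symm ▸ hγ
  simp only [cellSupport, mem_filter, mem_univ, true_and] at h2 ⊢
  rw [h] at h2
  simpa [cellOn, hγ] using h2

/-- The energy as a continuous linear functional of `θ`. -/
noncomputable def Ec (j : ∀ γ, I γ) : (TParam I b 𝒟 → ℝ) →L[ℝ] ℝ :=
  ∑ t : TParam I b 𝒟, if t.1.2 = cellOn b t.1.1 j then
    (ContinuousLinearMap.proj t : ((TParam I b 𝒟) → ℝ) →L[ℝ] ℝ) else 0

lemma Ec_apply (j : ∀ γ, I γ) (θ : TParam I b 𝒟 → ℝ) :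
    Ec b 𝒟 j θ = energy b 𝒟 θ j := by
  rw [Ec, energy, ContinuousLinearMap.sum_apply]
  refine Finset.sum_congr rfl fun t _ => ?_
  split <;> simp

lemma Ec_single (j : ∀ γ, I γ) (s : TParam I b 𝒟) :
    Ec b 𝒟 j (fun t' => if t' = s then 1 else 0) =
      if s.1.2 = cellOn b s.1.1 j then 1 else 0 := by
  rw [Ec, ContinuousLinearMap.sum_apply]
  rw [Finset.sum_eq_single s]
  · split <;> simp
  · intro t _ hts
    split <;> simp [hts]
  · simp

lemma Zfun_pos (θ : TParam I b 𝒟 → ℝ) : 0 < Zfun b 𝒟 θ := by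
  have : Nonempty (∀ γ, I γ) := ⟨b⟩
  exact Finset.sum_pos (fun j _ => Real.exp_pos _) Finset.univ_nonempty

/-- The derivative of `θ ↦ p_θ(j)` at `θ`. -/
noncomputable def Pd (θ : TParam I b 𝒟 → ℝ) (j : ∀ γ, I γ) :
    (TParam I b 𝒟 → ℝ) →L[ℝ] ℝ :=
  phier b 𝒟 θ j • (Ec b 𝒟 j - ∑ k : ∀ γ, I γ, phier b 𝒟 θ k • Ec b 𝒟 k)

lemma hasFDerivAt_energy (j : ∀ γ, I γ) (θ : TParam I b 𝒟 → ℝ) :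
    HasFDerivAt (fun θ' => energy b 𝒟 θ' j) (Ec b 𝒟 j) θ := by
  have h : (fun θ' => energy b 𝒟 θ' j) = fun θ' => Ec b 𝒟 j θ' := by
    funext θ'; rw [Ec_apply]
  rw [h]
  exact (Ec b 𝒟 j).hasFDerivAt

lemma hasFDerivAt_Zfun (θ : TParam I b 𝒟 → ℝ) :
    HasFDerivAt (fun θ' => Zfun b 𝒟 θ')
      (∑ k : ∀ γ, I γ, Real.exp (energy b 𝒟 θ k) • Ec b 𝒟 k) θ := by
  have : HasFDerivAt (fun θ' => ∑ k : ∀ γ, I γ, Real.exp (energy b 𝒟 θ' k))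
      (∑ k : ∀ γ, I γ, Real.exp (energy b 𝒟 θ k) • Ec b 𝒟 k) θ :=
    HasFDerivAt.fun_sum fun k _ =>
      (Real.hasDerivAt_exp _).comp_hasFDerivAt θ (hasFDerivAt_energy b 𝒟 k θ)
  exact this

lemma hasFDerivAt_phier (θ : TParam I b 𝒟 → ℝ) (j : ∀ γ, I γ) :
    HasFDerivAt (fun θ' => phier b 𝒟 θ' j) (Pd b 𝒟 θ j) θ := by
  have hE : HasFDerivAt (fun θ' => Real.exp (energy b 𝒟 θ' j))
      (Real.exp (energy b 𝒟 θ j) • Ec b 𝒟 j) θ :=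
    (Real.hasDerivAt_exp _).comp_hasFDerivAt θ (hasFDerivAt_energy b 𝒟 j θ)
  have hZ := hasFDerivAt_Zfun b 𝒟 θ
  have hne : Zfun b 𝒟 θ ≠ 0 := (Zfun_pos b 𝒟 θ).ne'
  have hinv : HasFDerivAt (fun θ' => (Zfun b 𝒟 θ')⁻¹)
      ((-(Zfun b 𝒟 θ ^ 2)⁻¹) • (∑ k : ∀ γ, I γ, Real.exp (energy b 𝒟 θ k) • Ec b 𝒟 k)) θ :=
    (hasDerivAt_inv hne).comp_hasFDerivAt θ hZ
  have h : HasFDerivAt (fun θ' => Real.exp (energy b 𝒟 θ' j) * (Zfun b 𝒟 θ')⁻¹)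
      (_ : (TParam I b 𝒟 → ℝ) →L[ℝ] ℝ) θ :=
    hE.mul hinv
  have heq : (fun θ' => phier b 𝒟 θ' j)
      = fun θ' => Real.exp (energy b 𝒟 θ' j) * (Zfun b 𝒟 θ')⁻¹ := by
    funext θ'; rw [phier, div_eq_mul_inv]
  rw [heq]
  convert h using 1
  ext v
  simp only [Pd, phier, ContinuousLinearMap.coe_smul', Pi.smul_apply,
    ContinuousLinearMap.coe_sub', Pi.sub_apply, ContinuousLinearMap.add_apply,
    ContinuousLinearMap.smul_apply, ContinuousLinearMap.sum_apply, smul_eq_mul,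
    div_eq_mul_inv]
  have hre : ∀ k : ∀ γ, I γ,
      Real.exp (energy b 𝒟 θ k) * (Zfun b 𝒟 θ)⁻¹ * Ec b 𝒟 k v
        = Real.exp (energy b 𝒟 θ k) * Ec b 𝒟 k v * (Zfun b 𝒟 θ)⁻¹ := fun k => by ring
  rw [Finset.sum_congr rfl fun k _ => hre k, ← Finset.sum_mul]
  field_simp
  ring

lemma hasFDerivAt_Phi (θ : TParam I b 𝒟 → ℝ) :
    HasFDerivAt (fun θ' (t : TParam I b 𝒟) => phier b 𝒟 θ' t.1.2)
      (ContinuousLinearMap.pi fun t : TParam I b 𝒟 => Pd b 𝒟 θ t.1.2) θ :=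
  hasFDerivAt_pi.2 fun t => hasFDerivAt_phier b 𝒟 θ t.1.2

/-- The zeta-type matrix. -/
def Amat : Matrix (TParam I b 𝒟) (TParam I b 𝒟) ℝ :=
  Matrix.of fun t s => if s.1.2 = cellOn b s.1.1 t.1.2 then 1 else 0

noncomputable def qv (θ : TParam I b 𝒟 → ℝ) (s : TParam I b 𝒟) : ℝ :=
  ∑ j : ∀ γ, I γ, phier b 𝒟 θ j * (if s.1.2 = cellOn b s.1.1 j then 1 else 0)

lemma sum_ax (h𝒟 : IsGenClass 𝒟) (j : ∀ γ, I γ) :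
    ∑ s : TParam I b 𝒟,
        (if s.1.2 = cellOn b s.1.1 j then (1 : ℝ) else 0) * (-1 : ℝ) ^ (s.1.1.card - 1)
      = ∑ F ∈ 𝒟.filter (· ⊆ cellSupport b j), (-1 : ℝ) ^ (F.card - 1) := by
  simp only [ite_mul, one_mul, zero_mul]
  rw [← Finset.sum_filter]
  refine Finset.sum_bij' (i := fun (s : TParam I b 𝒟) _ => s.1.1)
    (j := fun F hF =>
      (⟨(F, cellOn b F j), (Finset.mem_filter.1 hF).1,
        cellSupport_cellOn_of_subset b (Finset.mem_filter.1 hF).2⟩ : TParam I b 𝒟))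
    ?_ ?_ ?_ ?_ ?_
  · intro s hs
    rw [Finset.mem_filter] at hs ⊢
    exact ⟨s.2.1, subset_of_cond b 𝒟 hs.2⟩
  · intro F hF
    exact Finset.mem_filter.2 ⟨Finset.mem_univ _, rfl⟩
  · intro s hs
    rw [Finset.mem_filter] at hs
    exact Subtype.ext (Prod.ext rfl hs.2.symm)
  · intro F hF
    rfl
  · intro s _
    rfl

lemma sum_D_subsets (h𝒟 : IsGenClass 𝒟) {D : Finset V} (hD : D ∈ 𝒟) :
    ∑ F ∈ 𝒟.filter (· ⊆ D), (-1 : ℝ) ^ (F.card - 1) = 1 := by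
  have hfe : 𝒟.filter (· ⊆ D) = D.powerset.filter (· ≠ ∅) := by
    ext F
    simp only [mem_filter, mem_powerset]
    exact ⟨fun ⟨h1, h2⟩ => ⟨h2, h𝒟.2.1 F h1⟩, fun ⟨h1, h2⟩ => ⟨h𝒟.2.2 D hD F h1 h2, h1⟩⟩
  rw [hfe]
  have hD0 : D ≠ ∅ := h𝒟.2.1 D hD
  have hz : ∑ F ∈ D.powerset, (-1 : ℝ) ^ F.card = 0 := by
    have h := Finset.sum_powerset_neg_one_pow_card_of_nonempty
      (Finset.nonempty_iff_ne_empty.2 hD0)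
    have := congrArg (fun z : ℤ => (z : ℝ)) h
    push_cast at this
    simpa using this
  have hsplit := Finset.sum_filter_add_sum_filter_not D.powerset (· ≠ ∅)
    (fun F => (-1 : ℝ) ^ F.card)
  have hempty : D.powerset.filter (fun F => ¬ F ≠ ∅) = {∅} := by
    ext F
    simp only [mem_filter, mem_powerset, not_not, mem_singleton]
    exact ⟨fun h => h.2, fun h => ⟨h ▸ Finset.empty_subset D, h⟩⟩
  rw [hz, hempty] at hsplit
  simp only [Finset.sum_singleton, Finset.card_empty, pow_zero] at hsplit
  have hsum : ∑ F ∈ D.powerset.filter (· ≠ ∅), (-1 : ℝ) ^ F.card = -1 := by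
    linarith
  have hneg : ∀ F ∈ D.powerset.filter (· ≠ ∅),
      (-1 : ℝ) ^ (F.card - 1) = -((-1 : ℝ) ^ F.card) := by
    intro F hF
    have hF0 : F ≠ ∅ := (Finset.mem_filter.1 hF).2
    have hc : 1 ≤ F.card := Finset.card_pos.2 (Finset.nonempty_iff_ne_empty.2 hF0)
    obtain ⟨m, hm⟩ := Nat.exists_eq_add_of_le hc
    rw [hm]
    simp [pow_succ]
    ring
  rw [Finset.sum_congr rfl hneg, Finset.sum_neg_distrib, hsum]
  norm_num

lemma Amat_mulVec (h𝒟 : IsGenClass 𝒟) (t : TParam I b 𝒟) :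
    ∑ s : TParam I b 𝒟, Amat b 𝒟 t s * (-1 : ℝ) ^ (s.1.1.card - 1) = 1 := by
  have h1 : ∑ s : TParam I b 𝒟, Amat b 𝒟 t s * (-1 : ℝ) ^ (s.1.1.card - 1)
      = ∑ F ∈ 𝒟.filter (· ⊆ cellSupport b t.1.2), (-1 : ℝ) ^ (F.card - 1) :=
    sum_ax b 𝒟 h𝒟 t.1.2
  rw [h1, t.2.2]
  exact sum_D_subsets 𝒟 h𝒟 t.2.1

lemma Amat_det : (Amat b 𝒟).det = 1 := by
  rw [← Matrix.det_transpose]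
  have hbt : ((Amat b 𝒟)ᵀ).BlockTriangular (fun t : TParam I b 𝒟 => t.1.1.card) := by
    intro s t h
    simp only [Matrix.transpose_apply, Amat, Matrix.of_apply, ite_eq_right_iff, one_ne_zero]
    intro hc
    have hsub : s.1.1 ⊆ t.1.1 := t.2.2 ▸ subset_of_cond b 𝒟 hc
    exact absurd (Finset.card_le_card hsub) (not_le.2 h)
  rw [hbt.det]
  refine Finset.prod_eq_one fun n _ => ?_
  have hblk : ((Amat b 𝒟)ᵀ).toSquareBlock (fun t : TParam I b 𝒟 => t.1.1.card) n = 1 := by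
    ext s t
    simp only [Matrix.toSquareBlock_def, Matrix.transpose_apply, Amat, Matrix.of_apply]
    by_cases hst : s = t
    · subst hst
      have : s.1.1.2 = cellOn b s.1.1.1 s.1.1.2 := by
        conv_lhs => rw [← cellOn_support_self b s.1.1.2]
        rw [s.1.2.2]
      simp [← this, Matrix.one_apply]
    · have : ¬ s.1.1.2 = cellOn b s.1.1.1 t.1.1.2 := by
        intro hc
        have hsub : s.1.1.1 ⊆ t.1.1.1 := t.1.2.2 ▸ subset_of_cond b 𝒟 hc
        have hcard : t.1.1.1.card ≤ s.1.1.1.card := le_of_eq (t.2.trans s.2.symm)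
        have heq : s.1.1.1 = t.1.1.1 := Finset.eq_of_subset_of_card_le hsub hcard
        have heq2 : s.1.1.2 = t.1.1.2 := by
          rw [hc, heq, ← t.1.2.2, cellOn_support_self]
        exact hst (Subtype.ext (Subtype.ext (Prod.ext heq heq2)))
      simp [this, Matrix.one_apply, hst]
  rw [hblk, Matrix.det_one]

end JacAux

/-- The map `Φ : θ ↦ (p_θ(i_D, i*_{D^c}))_{(D,i_D)∈T}` is differentiable and the
determinant of its derivative is
`(∏_{(D,i_D)∈T} p_θ(i(D))) · (1 − Σ_{∅≠H⊆V} Σ_{l_H∈I_H*} p_θ(l(H)) Σ_{F∈𝒟,F⊆H} (−1)^{|F|−1})`. -/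
theorem jacobian_theta_to_prob {V : Type} [Fintype V] [DecidableEq V]
    {I : V → Type} [∀ γ, Fintype (I γ)] [∀ γ, DecidableEq (I γ)]
    (b : ∀ γ, I γ) (𝒟 : Finset (Finset V)) (h𝒟 : IsGenClass 𝒟) :
    Differentiable ℝ
      (fun (θ : TParam I b 𝒟 → ℝ) (t : TParam I b 𝒟) => phier b 𝒟 θ t.1.2) ∧
    ∀ θ : TParam I b 𝒟 → ℝ,
      LinearMap.det
        (fderiv ℝ (fun (θ' : TParam I b 𝒟 → ℝ) (t : TParam I b 𝒟) =>
          phier b 𝒟 θ' t.1.2) θ).toLinearMap =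
      (∏ t : TParam I b 𝒟, phier b 𝒟 θ t.1.2) *
        (1 - ∑ H ∈ (Finset.univ : Finset V).powerset.filter (· ≠ ∅),
              ∑ l ∈ Finset.univ.filter (fun l : (∀ γ, I γ) => cellSupport b l = H),
                phier b 𝒟 θ l * ∑ F ∈ 𝒟.filter (· ⊆ H), (-1 : ℝ) ^ (F.card - 1)) := by
  classical
  constructor
  · intro θ
    exact (hasFDerivAt_Phi b 𝒟 θ).differentiableAt
  intro θ
  rw [(hasFDerivAt_Phi b 𝒟 θ).fderiv]
  rw [← LinearMap.det_toMatrix']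
  -- identify the matrix
  have hM : LinearMap.toMatrix'
        (ContinuousLinearMap.pi fun t : TParam I b 𝒟 => Pd b 𝒟 θ t.1.2).toLinearMap
      = Matrix.diagonal (fun t : TParam I b 𝒟 => phier b 𝒟 θ t.1.2) *
        (Amat b 𝒟 - Matrix.of fun _ s : TParam I b 𝒟 => qv b 𝒟 θ s) := by
    ext t s
    rw [LinearMap.toMatrix'_apply]
    rw [Matrix.diagonal_mul]
    simp only [Matrix.sub_apply, Matrix.of_apply, Amat]
    have hps : (Pi.single s 1 : TParam I b 𝒟 → ℝ) = fun j' => if j' = s then 1 else 0 := by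
      funext j'; simp [Pi.single_apply]
    rw [hps]
    show (ContinuousLinearMap.pi fun t : TParam I b 𝒟 => Pd b 𝒟 θ t.1.2)
        (fun j' => if j' = s then 1 else 0) t = _
    rw [ContinuousLinearMap.pi_apply]
    simp only [Pd, ContinuousLinearMap.smul_apply, ContinuousLinearMap.sub_apply,
      ContinuousLinearMap.sum_apply, smul_eq_mul]
    rw [Ec_single]
    congr 1
    congr 1
    rw [qv]
    exact Finset.sum_congr rfl fun k _ => by rw [Ec_single]
  rw [hM, Matrix.det_mul, Matrix.det_diagonal]
  congr 1
  -- factor out Amat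
  have hfac : Amat b 𝒟 - (Matrix.of fun _ s : TParam I b 𝒟 => qv b 𝒟 θ s)
      = Amat b 𝒟 * (1 - Matrix.vecMulVec
          (fun s : TParam I b 𝒟 => (-1 : ℝ) ^ (s.1.1.card - 1)) (qv b 𝒟 θ)) := by
    rw [Matrix.mul_sub, Matrix.mul_one]
    congr 1
    ext t s
    rw [Matrix.mul_apply]
    simp only [Matrix.vecMulVec_apply, Matrix.of_apply]
    have : ∀ k : TParam I b 𝒟,
        Amat b 𝒟 t k * ((-1 : ℝ) ^ (k.1.1.card - 1) * qv b 𝒟 θ s)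
          = Amat b 𝒟 t k * (-1 : ℝ) ^ (k.1.1.card - 1) * qv b 𝒟 θ s := fun k => by ring
    rw [Finset.sum_congr rfl fun k _ => this k, ← Finset.sum_mul,
      Amat_mulVec b 𝒟 h𝒟 t, one_mul]
  rw [hfac, Matrix.det_mul, Amat_det, one_mul]
  have h1 : (1 : Matrix (TParam I b 𝒟) (TParam I b 𝒟) ℝ) - Matrix.vecMulVec
        (fun s : TParam I b 𝒟 => (-1 : ℝ) ^ (s.1.1.card - 1)) (qv b 𝒟 θ)
      = 1 + Matrix.replicateCol Unit (-(fun s : TParam I b 𝒟 => (-1 : ℝ) ^ (s.1.1.card - 1)))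
          * Matrix.replicateRow Unit (qv b 𝒟 θ) := by
    rw [sub_eq_add_neg]
    congr 1
    rw [Matrix.vecMulVec_eq Unit]
    ext i k
    simp [Matrix.mul_apply, Matrix.replicateCol, Matrix.replicateRow]
  rw [h1, Matrix.det_one_add_replicateCol_mul_replicateRow]
  have hq : dotProduct (qv b 𝒟 θ)
        (fun s : TParam I b 𝒟 => (-1 : ℝ) ^ (s.1.1.card - 1))
      = ∑ H ∈ (Finset.univ : Finset V).powerset.filter (· ≠ ∅),
          ∑ l ∈ Finset.univ.filter (fun l : (∀ γ, I γ) => cellSupport b l = H),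
            phier b 𝒟 θ l * ∑ F ∈ 𝒟.filter (· ⊆ H), (-1 : ℝ) ^ (F.card - 1) := by
    rw [dotProduct]
    have hstep : ∀ s : TParam I b 𝒟,
        qv b 𝒟 θ s * (-1 : ℝ) ^ (s.1.1.card - 1)
          = ∑ j : ∀ γ, I γ, phier b 𝒟 θ j *
              ((if s.1.2 = cellOn b s.1.1 j then (1:ℝ) else 0) *
                (-1 : ℝ) ^ (s.1.1.card - 1)) := by
      intro s
      rw [qv, Finset.sum_mul]
      exact Finset.sum_congr rfl fun j _ => by ring
    rw [Finset.sum_congr rfl fun s _ => hstep s, Finset.sum_comm]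
    have hinner : ∀ j : ∀ γ, I γ,
        ∑ s : TParam I b 𝒟, phier b 𝒟 θ j *
            ((if s.1.2 = cellOn b s.1.1 j then (1:ℝ) else 0) * (-1 : ℝ) ^ (s.1.1.card - 1))
          = phier b 𝒟 θ j *
              ∑ F ∈ 𝒟.filter (· ⊆ cellSupport b j), (-1 : ℝ) ^ (F.card - 1) := by
      intro j
      rw [← Finset.mul_sum, sum_ax b 𝒟 h𝒟 j]
    rw [Finset.sum_congr rfl fun j _ => hinner j]
    rw [← Finset.sum_fiberwise_of_maps_to
      (g := cellSupport b) (t := (Finset.univ : Finset V).powerset)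
      (fun j _ => Finset.mem_powerset.2 (Finset.subset_univ _))]
    have hfib : ∀ H ∈ (Finset.univ : Finset V).powerset,
        ∑ j ∈ Finset.univ.filter (fun j : ∀ γ, I γ => cellSupport b j = H),
            phier b 𝒟 θ j * ∑ F ∈ 𝒟.filter (· ⊆ cellSupport b j), (-1 : ℝ) ^ (F.card - 1)
          = ∑ j ∈ Finset.univ.filter (fun j : ∀ γ, I γ => cellSupport b j = H),
              phier b 𝒟 θ j * ∑ F ∈ 𝒟.filter (· ⊆ H), (-1 : ℝ) ^ (F.card - 1) := by
      intro H _
      refine Finset.sum_congr rfl fun j hj => ?_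
      rw [(Finset.mem_filter.1 hj).2]
    rw [Finset.sum_congr rfl hfib]
    rw [← Finset.sum_filter_add_sum_filter_not (Finset.univ : Finset V).powerset (· ≠ ∅)]
    have hzero : ∑ H ∈ (Finset.univ : Finset V).powerset.filter (fun H => ¬ H ≠ ∅),
        ∑ j ∈ Finset.univ.filter (fun j : ∀ γ, I γ => cellSupport b j = H),
          phier b 𝒟 θ j * ∑ F ∈ 𝒟.filter (· ⊆ H), (-1 : ℝ) ^ (F.card - 1) = 0 := by
      refine Finset.sum_eq_zero fun H hH => ?_
      have hH0 : H = ∅ := not_not.1 (Finset.mem_filter.1 hH).2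
      subst hH0
      have he : 𝒟.filter (· ⊆ (∅ : Finset V)) = ∅ := by
        rw [Finset.filter_eq_empty_iff]
        intro F hF hsub
        exact h𝒟.2.1 F hF (Finset.subset_empty.1 hsub)
      rw [he]
      simp
    rw [hzero, add_zero]
  rw [dotProduct_neg, hq]
  ring
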